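/- Let L be a finite distributive lattice of subspaces of a vector space with a common basis E (each subspace in L is spanned by its intersection with E). For each join-irreducible element V_i of L, let E^i ⊂ E consist of those basis vectors lying in V_i but in no proper subspace V_j ⊊ V_i of L. Then E^i is a basis of the minimal subquotient K_i = V_i / Σ_{V_j ⊊ V_i} V_j, where the sum is over join-irreducibles V_j strictly contained in V_i. -/

import Mathlib

/-- Let `L` be a finite lattice of subspaces (closed under `⊓` and `⊔`) with a common
basis `e` (each member of `L` is spanned by the basis vectors it contains).  Let `Vi`
be a join-irreducible member of `L` and let `W` be the sum of all join-irreducible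
members of `L` strictly contained in `Vi`.  Then the basis vectors lying in `Vi` but
in no proper member `Vj ⊊ Vi` of `L` form (via the quotient map) a basis of the
minimal subquotient `Vi / W`. -/
theorem stmt_7 {K U ι : Type*} [Field K] [AddCommGroup U] [Module K U]
    (L : Set (Submodule K U)) (hLfin : L.Finite)
    (hinf : ∀ V ∈ L, ∀ W ∈ L, V ⊓ W ∈ L) (hsup : ∀ V ∈ L, ∀ W ∈ L, V ⊔ W ∈ L)
    (e : Module.Basis ι K U)
    (hcommon : ∀ V ∈ L, V = Submodule.span K (Set.range e ∩ (V : Set U)))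
    (Vi : Submodule K U) (hVi : Vi ∈ L)
    (hirr : ∀ W₁ ∈ L, ∀ W₂ ∈ L, Vi = W₁ ⊔ W₂ → Vi = W₁ ∨ Vi = W₂)
    (W : Submodule K U)
    (hW : W = sSup {Vj | Vj ∈ L ∧
      (∀ W₁ ∈ L, ∀ W₂ ∈ L, Vj = W₁ ⊔ W₂ → Vj = W₁ ∨ Vj = W₂) ∧ Vj < Vi}) :
    ∃ b : Module.Basis {v : U // v ∈ Set.range e ∧ v ∈ Vi ∧ ∀ Vj ∈ L, Vj < Vi → v ∉ Vj} K
        (Vi ⧸ (W.comap Vi.subtype)),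
      ∀ v, b v = Submodule.Quotient.mk ⟨v.1, v.2.2.1⟩ := by
  classical
  -- index sets
  set EIset : Set U := {v : U | v ∈ Set.range e ∧ v ∈ Vi ∧ ∀ Vj ∈ L, Vj < Vi → v ∉ Vj}
    with hEIset
  set S : Set ι := {i : ι | e i ∈ Vi ∧ ∀ Vj ∈ L, Vj < Vi → e i ∉ Vj} with hS
  set T : Set ι := {i : ι | e i ∈ Vi ∧ ∃ Vj ∈ L, Vj < Vi ∧ e i ∈ Vj} with hT
  have hEIeq : EIset = e '' S := by
    ext v
    constructor
    · rintro ⟨⟨i, rfl⟩, h1, h2⟩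
      exact ⟨i, ⟨h1, h2⟩, rfl⟩
    · rintro ⟨i, ⟨h1, h2⟩, rfl⟩
      exact ⟨⟨i, rfl⟩, h1, h2⟩
  -- Lemma A: every member of L strictly below Vi is contained in W
  have lemA : ∀ Vj ∈ L, Vj < Vi → Vj ≤ W := by
    have key : ∀ n : ℕ, ∀ Vj ∈ L, Vj < Vi →
        (hLfin.toFinset.filter (fun V => V < Vj)).card ≤ n → Vj ≤ W := by
      intro n
      induction n with
      | zero =>
        intro Vj hVjL hVjlt hcard
        by_cases hj : ∀ W₁ ∈ L, ∀ W₂ ∈ L, Vj = W₁ ⊔ W₂ → Vj = W₁ ∨ Vj = W₂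
        · rw [hW]; exact le_sSup ⟨hVjL, hj, hVjlt⟩
        · push_neg at hj
          obtain ⟨W₁, hW₁L, W₂, hW₂L, heq, hne₁, hne₂⟩ := hj
          have hlt : W₁ < Vj := lt_of_le_of_ne (heq ▸ le_sup_left) (Ne.symm hne₁)
          have : W₁ ∈ hLfin.toFinset.filter (fun V => V < Vj) := by
            simp [hLfin.mem_toFinset, hW₁L, hlt]
          have := Finset.card_pos.mpr ⟨W₁, this⟩
          omega
      | succ n ih =>
        intro Vj hVjL hVjlt hcard
        by_cases hj : ∀ W₁ ∈ L, ∀ W₂ ∈ L, Vj = W₁ ⊔ W₂ → Vj = W₁ ∨ Vj = W₂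
        · rw [hW]; exact le_sSup ⟨hVjL, hj, hVjlt⟩
        · push_neg at hj
          obtain ⟨W₁, hW₁L, W₂, hW₂L, heq, hne₁, hne₂⟩ := hj
          have hlt₁ : W₁ < Vj := lt_of_le_of_ne (heq ▸ le_sup_left) (Ne.symm hne₁)
          have hlt₂ : W₂ < Vj := lt_of_le_of_ne (heq ▸ le_sup_right) (Ne.symm hne₂)
          have hsubcard : ∀ Wk, Wk ∈ L → Wk < Vj →
              (hLfin.toFinset.filter (fun V => V < Wk)).card ≤ n := by
            intro Wk hWkL hWklt
            have hss : hLfin.toFinset.filter (fun V => V < Wk) ⊂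
                hLfin.toFinset.filter (fun V => V < Vj) := by
              refine Finset.ssubset_iff_of_subset ?_ |>.mpr ⟨Wk, ?_, ?_⟩
              · intro V hV
                simp only [Finset.mem_filter, hLfin.mem_toFinset] at hV ⊢
                exact ⟨hV.1, hV.2.trans hWklt⟩
              · simp [hLfin.mem_toFinset, hWkL, hWklt]
              · simp
            have := Finset.card_lt_card hss
            omega
          have h₁ : W₁ ≤ W := ih W₁ hW₁L (hlt₁.trans hVjlt) (hsubcard W₁ hW₁L hlt₁)
          have h₂ : W₂ ≤ W := ih W₂ hW₂L (hlt₂.trans hVjlt) (hsubcard W₂ hW₂L hlt₂)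
          rw [heq]
          exact sup_le h₁ h₂
    intro Vj hVjL hVjlt
    exact key (hLfin.toFinset.filter (fun V => V < Vj)).card Vj hVjL hVjlt le_rfl
  -- Lemma C: span of the "old" basis vectors is inside W
  have lemC : Submodule.span K (e '' T) ≤ W := by
    rw [Submodule.span_le]
    rintro v ⟨i, ⟨hiVi, Vj, hVjL, hVjlt, hiVj⟩, rfl⟩
    exact lemA Vj hVjL hVjlt hiVj
  -- Lemma B: W is inside the span of the "old" basis vectors
  have lemB : W ≤ Submodule.span K (e '' T) := by
    rw [hW]
    apply sSup_le
    rintro Vj ⟨hVjL, hVjirr, hVjlt⟩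
    rw [hcommon Vj hVjL]
    apply Submodule.span_le.mpr
    rintro v ⟨⟨i, rfl⟩, hvVj⟩
    exact Submodule.subset_span ⟨i, ⟨hVjlt.le hvVj, Vj, hVjL, hVjlt, hvVj⟩, rfl⟩
  -- Lemma D: Vi is inside span EIset ⊔ W
  have lemD : (Vi : Set U) ⊆ (Submodule.span K EIset ⊔ W : Submodule K U) := by
    intro x hx
    rw [hcommon Vi hVi] at hx
    refine Submodule.span_le.mpr ?_ hx
    rintro v ⟨⟨i, rfl⟩, hvVi⟩
    by_cases hcase : ∀ Vj ∈ L, Vj < Vi → e i ∉ Vj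
    · exact Submodule.mem_sup_left (Submodule.subset_span ⟨⟨i, rfl⟩, hvVi, hcase⟩)
    · push_neg at hcase
      obtain ⟨Vj, hVjL, hVjlt, hiVj⟩ := hcase
      exact Submodule.mem_sup_right
        (lemC (Submodule.subset_span ⟨i, ⟨hvVi, Vj, hVjL, hVjlt, hiVj⟩, rfl⟩))
  -- disjointness of spans
  have hST : Disjoint S T := by
    rw [Set.disjoint_left]
    rintro i ⟨hiVi, hnone⟩ ⟨_, Vj, hVjL, hVjlt, hiVj⟩
    exact hnone Vj hVjL hVjlt hiVj
  have lemE : Disjoint (Submodule.span K EIset) (Submodule.span K (e '' T)) := by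
    rw [hEIeq]
    exact e.linearIndependent.disjoint_span_image hST
  have hEIVi : Submodule.span K EIset ≤ Vi := by
    rw [Submodule.span_le]; rintro v ⟨_, hv, _⟩; exact hv
  -- the family
  set W' : Submodule K Vi := W.comap Vi.subtype with hW'
  set v0 : {v : U // v ∈ Set.range e ∧ v ∈ Vi ∧ ∀ Vj ∈ L, Vj < Vi → v ∉ Vj} → Vi :=
    fun x => ⟨x.1, x.2.2.1⟩ with hv0
  set f : {v : U // v ∈ Set.range e ∧ v ∈ Vi ∧ ∀ Vj ∈ L, Vj < Vi → v ∉ Vj} → Vi ⧸ W' :=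
    fun x => W'.mkQ (v0 x) with hf
  -- linear independence
  have hcoe : LinearIndependent K (fun x :
      {v : U // v ∈ Set.range e ∧ v ∈ Vi ∧ ∀ Vj ∈ L, Vj < Vi → v ∉ Vj} => (x.1 : U)) := by
    have h1 : LinearIndependent K ((↑) : Set.range e → U) :=
      (linearIndepOn_id_range_iff e.injective).mpr e.linearIndependent
    have h2 : EIset ⊆ Set.range e := fun v hv => hv.1
    exact LinearIndepOn.mono (v := id) h1 h2
  have hv0ind : LinearIndependent K v0 :=
    LinearIndependent.of_comp Vi.subtype hcoe
  have hdisj : Disjoint (Submodule.span K (Set.range v0)) (LinearMap.ker W'.mkQ) := by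
    rw [Submodule.ker_mkQ, Submodule.disjoint_def]
    intro x hx hxW'
    have hxU : (x : U) ∈ Submodule.span K EIset := by
      have := Submodule.mem_map_of_mem (f := Vi.subtype) hx
      rw [Submodule.map_span] at this
      have himg : Vi.subtype '' Set.range v0 = EIset := by
        rw [← Set.range_comp]
        have : (Vi.subtype ∘ v0) = fun x => (x.1 : U) := rfl
        rw [this, Subtype.range_coe_subtype]
      rwa [himg] at this
    have hxW : (x : U) ∈ Submodule.span K (e '' T) := lemB hxW'
    have : (x : U) = 0 := lemE.le_bot ⟨hxU, hxW⟩
    exact Subtype.ext this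
  have hfind : LinearIndependent K f := hv0ind.map hdisj
  -- spanning
  have hspan : ⊤ ≤ Submodule.span K (Set.range f) := by
    rintro q -
    obtain ⟨x, rfl⟩ := W'.mkQ_surjective q
    have hxD : (x : U) ∈ (Submodule.span K EIset ⊔ W : Submodule K U) := lemD x.2
    rw [Submodule.mem_sup] at hxD
    obtain ⟨y, hy, z, hz, hyz⟩ := hxD
    have hyVi : y ∈ Vi := hEIVi hy
    have hkey : ∀ y' (hy' : y' ∈ Submodule.span K EIset),
        W'.mkQ ⟨y', hEIVi hy'⟩ ∈ Submodule.span K (Set.range f) := by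
      intro y' hy'
      induction hy' using Submodule.span_induction with
      | mem v hv => exact Submodule.subset_span ⟨⟨v, hv⟩, rfl⟩
      | zero =>
        have : (⟨0, hEIVi (Submodule.zero_mem _)⟩ : Vi) = 0 := rfl
        rw [this, map_zero]
        exact Submodule.zero_mem _
      | add a b ha hb iha ihb =>
        have : (⟨a + b, hEIVi (Submodule.add_mem _ ha hb)⟩ : Vi) =
            ⟨a, hEIVi ha⟩ + ⟨b, hEIVi hb⟩ := rfl
        rw [this, map_add]
        exact Submodule.add_mem _ iha ihb
      | smul c a ha iha =>
        have : (⟨c • a, hEIVi (Submodule.smul_mem _ c ha)⟩ : Vi) =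
            c • ⟨a, hEIVi ha⟩ := rfl
        rw [this, map_smul]
        exact Submodule.smul_mem _ c iha
    have heq : W'.mkQ x = W'.mkQ ⟨y, hyVi⟩ := by
      rw [Submodule.mkQ_apply, Submodule.mkQ_apply, Submodule.Quotient.eq]
      have : ((x - ⟨y, hyVi⟩ : Vi) : U) = z := by
        simp [← hyz]
      show (x - ⟨y, hyVi⟩ : Vi) ∈ W'
      rw [Submodule.mem_comap]
      simpa [this] using hz
    rw [heq]
    have := hkey y hy
    convert this using 2
  refine ⟨Module.Basis.mk hfind hspan, ?_⟩
  intro v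
  rw [Module.Basis.mk_apply]
  rfl
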